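/- Let a, b ∈ ℝⁿ with ‖a‖ ≠ 1, ‖b‖ ≠ 1 and a ≠ b, and let T = τ_b ∘ τ_a : S^{n-1} → S^{n-1}. Then for x ∈ S^{n-1}, T(x) = x if and only if either ⟨x,a⟩ = 1 and ⟨x,b⟩ = 1, or x lies on the affine line L_{a,b} through a and b. Equivalently, the fixed point set of T is Z_{a,b} ∪ (L_{a,b} ∩ S^{n-1}), where Z_{a,b} = {x ∈ S^{n-1} : ⟨x,a⟩ = ⟨x,b⟩ = 1}. -/

import Mathlib

open Metric

noncomputable section

/-- The `a`-symmetry of the unit sphere. -/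
def tau {n : ℕ} (a x : EuclideanSpace ℝ (Fin n)) : EuclideanSpace ℝ (Fin n) :=
  x + (2 * (1 - (inner ℝ x a : ℝ)) / ‖a - x‖ ^ 2) • (a - x)

variable {n : ℕ}

lemma sub_ne_zero_of_norm_ne {a x : EuclideanSpace ℝ (Fin n)}
    (hx : ‖x‖ = 1) (ha : ‖a‖ ≠ 1) : a - x ≠ 0 := by
  intro h
  rw [sub_eq_zero] at h
  exact ha (h ▸ hx)

lemma norm_sub_sq' {a x : EuclideanSpace ℝ (Fin n)} (hx : ‖x‖ = 1) :
    ‖a - x‖ ^ 2 = ‖a‖ ^ 2 - 2 * (inner ℝ x a : ℝ) + 1 := by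
  rw [norm_sub_sq_real, real_inner_comm, hx]
  ring

lemma norm_tau {a x : EuclideanSpace ℝ (Fin n)} (hx : ‖x‖ = 1) (ha : ‖a‖ ≠ 1) :
    ‖tau a x‖ = 1 := by
  have hu : a - x ≠ 0 := sub_ne_zero_of_norm_ne hx ha
  have h2 : ‖a - x‖ ^ 2 ≠ 0 := pow_ne_zero _ (norm_ne_zero_iff.mpr hu)
  set s : ℝ := 2 * (1 - (inner ℝ x a : ℝ)) / ‖a - x‖ ^ 2 with hs
  have hsu : s * ‖a - x‖ ^ 2 = 2 * (1 - (inner ℝ x a : ℝ)) := div_mul_cancel₀ _ h2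
  have hxu : (inner ℝ x (a - x) : ℝ) = (inner ℝ x a : ℝ) - 1 := by
    rw [inner_sub_right, real_inner_self_eq_norm_sq, hx]
    ring
  have key : ‖tau a x‖ ^ 2 = 1 := by
    rw [tau, norm_add_sq_real, real_inner_smul_right, norm_smul, mul_pow, hxu, hx,
      Real.norm_eq_abs, sq_abs, ← hs]
    linear_combination (s - 2) * hsu + (4 - 4 * (inner ℝ x a : ℝ)) * mul_inv_cancel₀ h2
  nlinarith [norm_nonneg (tau a x), key]

lemma tau_invol {a x : EuclideanSpace ℝ (Fin n)} (hx : ‖x‖ = 1) (ha : ‖a‖ ≠ 1) :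
    tau a (tau a x) = x := by
  have hu : a - x ≠ 0 := sub_ne_zero_of_norm_ne hx ha
  have h2 : ‖a - x‖ ^ 2 ≠ 0 := pow_ne_zero _ (norm_ne_zero_iff.mpr hu)
  set s : ℝ := 2 * (1 - (inner ℝ x a : ℝ)) / ‖a - x‖ ^ 2 with hsdef
  have hsu : s * ‖a - x‖ ^ 2 = 2 * (1 - (inner ℝ x a : ℝ)) := div_mul_cancel₀ _ h2
  have hy : tau a x = x + s • (a - x) := rfl
  have hs1 : s ≠ 1 := by
    intro h
    apply ha
    have : tau a x = a := by rw [hy, h, one_smul]; abel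
    rw [← this, norm_tau hx ha]
  have h1s : (1 : ℝ) - s ≠ 0 := sub_ne_zero.mpr (Ne.symm hs1)
  have hay : a - tau a x = (1 - s) • (a - x) := by
    rw [hy]
    match_scalars <;> ring
  have hya : (inner ℝ (tau a x) a : ℝ) = (inner ℝ x a : ℝ) + s * (‖a‖ ^ 2 - (inner ℝ x a : ℝ)) := by
    rw [hy, inner_add_left, real_inner_smul_left, inner_sub_left,
      real_inner_self_eq_norm_sq]
  have hnay : ‖a - tau a x‖ ^ 2 = (1 - s) ^ 2 * ‖a - x‖ ^ 2 := by
    rw [hay, norm_smul, mul_pow, Real.norm_eq_abs, sq_abs]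
  have hU : ‖a - x‖ ^ 2 = ‖a‖ ^ 2 - 2 * (inner ℝ x a : ℝ) + 1 := norm_sub_sq' hx
  have hden : ((1 : ℝ) - s) ^ 2 * ‖a - x‖ ^ 2 ≠ 0 := mul_ne_zero (pow_ne_zero _ h1s) h2
  have hcoef : 2 * (1 - (inner ℝ (tau a x) a : ℝ)) / ((1 - s) ^ 2 * ‖a - x‖ ^ 2) * (1 - s)
      = -s := by
    rw [hya, div_mul_eq_mul_div, div_eq_iff hden]
    linear_combination ((1 - s) ^ 2 - 2 * (1 - s)) * hsu + 2 * s * (1 - s) * hU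
  show tau a x + _ • (a - tau a x) = x
  rw [hnay, hay, smul_smul, hcoef, hy]
  match_scalars <;> ring

lemma tau_fixed_iff {a x : EuclideanSpace ℝ (Fin n)} (hx : ‖x‖ = 1) (ha : ‖a‖ ≠ 1) :
    tau a x = x ↔ (inner ℝ x a : ℝ) = 1 := by
  have hu : a - x ≠ 0 := sub_ne_zero_of_norm_ne hx ha
  have h2 : ‖a - x‖ ^ 2 ≠ 0 := pow_ne_zero _ (norm_ne_zero_iff.mpr hu)
  constructor
  · intro h
    rw [tau, add_eq_left] at h
    rcases smul_eq_zero.mp h with h' | h'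
    · rcases div_eq_zero_iff.mp h' with h'' | h''
      · linarith
      · exact absurd h'' h2
    · exact absurd h' hu
  · intro h
    rw [tau, h]
    simp

lemma tau_collinear {a b x : EuclideanSpace ℝ (Fin n)} (hx : ‖x‖ = 1)
    (ha : ‖a‖ ≠ 1) {c : ℝ} (hc : c ≠ 0) (hbx : b - x = c • (a - x)) :
    tau b x = tau a x := by
  have hu : a - x ≠ 0 := sub_ne_zero_of_norm_ne hx ha
  have h2 : ‖a - x‖ ^ 2 ≠ 0 := pow_ne_zero _ (norm_ne_zero_iff.mpr hu)
  have hib : (inner ℝ x b : ℝ) = 1 + c * ((inner ℝ x a : ℝ) - 1) := by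
    have hb' : b = x + c • (a - x) := by rw [← hbx]; abel
    rw [hb', inner_add_right, real_inner_smul_right, inner_sub_right,
      real_inner_self_eq_norm_sq, hx]
    ring
  have hnb : ‖c • (a - x)‖ ^ 2 = c ^ 2 * ‖a - x‖ ^ 2 := by
    rw [norm_smul, mul_pow, Real.norm_eq_abs, sq_abs]
  rw [tau, tau, hbx, hnb, hib, smul_smul]
  congr 1
  congr 1
  rw [div_mul_eq_mul_div, div_eq_div_iff (mul_ne_zero (pow_ne_zero 2 hc) h2) h2]
  ring

theorem fixed_points_of_T
    {n : ℕ} (hn : 2 ≤ n) (a b : EuclideanSpace ℝ (Fin n))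
    (ha : ‖a‖ ≠ 1) (hb : ‖b‖ ≠ 1) (hab : a ≠ b) :
    ∀ x ∈ sphere (0 : EuclideanSpace ℝ (Fin n)) 1,
      (tau b (tau a x) = x ↔
        ((inner ℝ x a : ℝ) = 1 ∧ (inner ℝ x b : ℝ) = 1) ∨
          (∃ t : ℝ, x = a + t • (b - a))) := by
  intro x hx'
  have hx : ‖x‖ = 1 := by simpa [mem_sphere_zero_iff_norm] using hx'
  have hua : a - x ≠ 0 := sub_ne_zero_of_norm_ne hx ha
  have hub : b - x ≠ 0 := sub_ne_zero_of_norm_ne hx hb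
  constructor
  · intro hT
    have heq : tau a x = tau b x := by
      have h1 : tau b (tau b (tau a x)) = tau a x := tau_invol (norm_tau hx ha) hb
      rw [hT] at h1
      exact h1.symm
    by_cases hα : (inner ℝ x a : ℝ) = 1
    · left
      refine ⟨hα, ?_⟩
      have h2 : tau b x = x := by
        rw [← heq, (tau_fixed_iff hx ha).mpr hα]
      exact (tau_fixed_iff hx hb).mp h2
    · right
      have h2a : ‖a - x‖ ^ 2 ≠ 0 := pow_ne_zero _ (norm_ne_zero_iff.mpr hua)
      set s : ℝ := 2 * (1 - (inner ℝ x a : ℝ)) / ‖a - x‖ ^ 2 with hsdef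
      set t : ℝ := 2 * (1 - (inner ℝ x b : ℝ)) / ‖b - x‖ ^ 2 with htdef
      have hs0 : s ≠ 0 := by
        rw [hsdef]
        intro h
        rcases div_eq_zero_iff.mp h with h' | h'
        · exact hα (by linarith)
        · exact h2a h'
      have hst : s • (a - x) = t • (b - x) := by
        have h3 : x + s • (a - x) = x + t • (b - x) := heq
        exact add_left_cancel h3
      have hax : a - x = (s⁻¹ * t) • (b - x) := by
        have h4 : (s⁻¹ * s) • (a - x) = (s⁻¹ * t) • (b - x) := by
          rw [mul_smul, mul_smul, hst]
        simpa [inv_mul_cancel₀ hs0] using h4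
      set c : ℝ := s⁻¹ * t with hcdef
      have hc1 : c ≠ 1 := by
        intro h
        rw [h, one_smul] at hax
        exact hab (sub_left_inj.mp hax)
      have h1c : (1 : ℝ) - c ≠ 0 := sub_ne_zero.mpr (Ne.symm hc1)
      have hx'' : (1 - c) • x = a - c • b := by
        linear_combination (norm := module) -hax
      refine ⟨-c / (1 - c), ?_⟩
      calc x = (1 - c)⁻¹ • ((1 - c) • x) := by
              rw [smul_smul, inv_mul_cancel₀ h1c, one_smul]
        _ = (1 - c)⁻¹ • (a - c • b) := by rw [hx'']
        _ = a + (-c / (1 - c)) • (b - a) := by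
              match_scalars <;> (field_simp; try ring)
  · rintro (⟨hA, hB⟩ | ⟨t, hxt⟩)
    · rw [(tau_fixed_iff hx ha).mpr hA, (tau_fixed_iff hx hb).mpr hB]
    · have ht0 : t ≠ 0 := by
        rintro rfl
        simp only [zero_smul, add_zero] at hxt
        exact ha (by rw [← hxt]; exact hx)
      have ht1 : t ≠ 1 := by
        rintro rfl
        rw [one_smul] at hxt
        have : x = b := by rw [hxt]; abel
        exact hb (by rw [← this]; exact hx)
      have hbx : b - x = ((t - 1) / t) • (a - x) := by
        rw [hxt]
        match_scalars <;> (field_simp; try ring)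
      have hc : ((t - 1) / t) ≠ 0 := div_ne_zero (sub_ne_zero.mpr ht1) ht0
      have h5 : tau b x = tau a x := tau_collinear hx ha hc hbx
      rw [← h5]
      exact tau_invol hx hb
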